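/- Let F : ℝ^D → ℝ be differentiable with M-Lipschitz gradient and bounded below by F*. Let x₀ ∈ ℝ^D be deterministic and let (x_t)_{t≥0} be a random process with x_{t+1} = x_t + s_t, where conditionally on x_t the step s_t satisfies E[s_t | x_t] = −θ∇F(x_t) and E[‖s_t‖₂² | x_t] ≤ (θ²/p)·‖∇F(x_t)‖₂² + c, for constants θ ∈ (0,1], p ∈ (0,1], c ≥ 0 with θ < 2p/M. Then for every T ≥ 0, Σ_{t=0}^{T} E[‖∇F(x_t)‖₂²] ≤ (2p·(F(x₀) − F*) + M·p·c·(T+1)) / (2pθ − Mθ²). -/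

import Mathlib

open MeasureTheory

local notation "⟪" x ", " y "⟫" => @inner ℝ _ _ x y

private lemma coord_abs_le_norm' {D : ℕ} (x : EuclideanSpace ℝ (Fin D)) (i : Fin D) :
    |x i| ≤ ‖x‖ := by
  have h := abs_real_inner_le_norm (EuclideanSpace.single i (1:ℝ)) x
  rw [EuclideanSpace.inner_single_left] at h
  simpa [EuclideanSpace.norm_single] using h

private lemma descent_abs' {E : Type*} [NormedAddCommGroup E] [InnerProductSpace ℝ E]
    [CompleteSpace E] (F : E → ℝ) (M : ℝ) (hM : 0 ≤ M)
    (hF : Differentiable ℝ F) (hLip : LipschitzWith M.toNNReal (gradient F))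
    (x y : E) :
    |F y - F x - ⟪gradient F x, y - x⟫| ≤ M / 2 * ‖y - x‖ ^ 2 := by
  set v := y - x with hv
  have hγ : ∀ t : ℝ, HasDerivAt (fun t : ℝ => x + t • v) v t := by
    intro t
    simpa using ((hasDerivAt_id t).smul_const v).const_add x
  have hd : ∀ t : ℝ, HasDerivAt (fun t : ℝ => F (x + t • v))
      ⟪gradient F (x + t • v), v⟫ t := by
    intro t
    have h1 : HasGradientAt F (gradient F (x + t • v)) (x + t • v) :=
      (hF _).hasGradientAt
    have h2 := (hasGradientAt_iff_hasFDerivAt.mp h1)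
    have := h2.comp_hasDerivAt t (hγ t)
    exact this
  have hcont : Continuous fun t : ℝ => ⟪gradient F (x + t • v), v⟫ := by
    exact (Continuous.inner (hLip.continuous.comp (by continuity)) continuous_const)
  have hFTC : ∫ t in (0:ℝ)..1, ⟪gradient F (x + t • v), v⟫ =
      F (x + (1:ℝ) • v) - F (x + (0:ℝ) • v) := by
    exact intervalIntegral.integral_eq_sub_of_hasDerivAt (fun t _ => hd t)
      (hcont.intervalIntegrable 0 1)
  have hxy : F (x + (1:ℝ) • v) = F y := by simp [hv]
  have hx0 : F (x + (0:ℝ) • v) = F x := by simp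
  have hconst : ∫ t in (0:ℝ)..1, ⟪gradient F x, v⟫ = ⟪gradient F x, v⟫ := by
    simp
  have key : F y - F x - ⟪gradient F x, v⟫ =
      ∫ t in (0:ℝ)..1, (⟪gradient F (x + t • v), v⟫ - ⟪gradient F x, v⟫) := by
    rw [intervalIntegral.integral_sub (hcont.intervalIntegrable 0 1)
      (intervalIntegrable_const), hFTC, hconst, hxy, hx0]
  rw [key]
  have hbound : ∀ t ∈ Set.Icc (0:ℝ) 1,
      |⟪gradient F (x + t • v), v⟫ - ⟪gradient F x, v⟫| ≤ (M * ‖v‖ ^ 2) * t := by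
    intro t ht
    rw [← inner_sub_left]
    calc |⟪gradient F (x + t • v) - gradient F x, v⟫|
        ≤ ‖gradient F (x + t • v) - gradient F x‖ * ‖v‖ := abs_real_inner_le_norm _ _
      _ ≤ (M * (t * ‖v‖)) * ‖v‖ := by
          have := hLip.dist_le_mul (x + t • v) x
          rw [dist_eq_norm, dist_eq_norm] at this
          have h2 : ‖x + t • v - x‖ = t * ‖v‖ := by
            rw [add_sub_cancel_left, norm_smul, Real.norm_eq_abs, abs_of_nonneg ht.1]
          rw [h2, Real.coe_toNNReal M hM] at this
          have hvn : (0:ℝ) ≤ ‖v‖ := norm_nonneg _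
          nlinarith [dist_nonneg (x := gradient F (x + t • v)) (y := gradient F x)]
      _ = (M * ‖v‖ ^ 2) * t := by ring
  calc |∫ t in (0:ℝ)..1, (⟪gradient F (x + t • v), v⟫ - ⟪gradient F x, v⟫)|
      ≤ ∫ t in (0:ℝ)..1, (M * ‖v‖ ^ 2) * t := by
        refine (intervalIntegral.abs_integral_le_integral_abs (by norm_num)).trans ?_
        refine intervalIntegral.integral_mono_on (by norm_num) ((hcont.sub continuous_const).abs.intervalIntegrable 0 1) ?_ hbound
        exact (continuous_const.mul continuous_id).intervalIntegrable 0 1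
    _ = M / 2 * ‖v‖ ^ 2 := by
        rw [intervalIntegral.integral_const_mul, integral_id]
        ring

private lemma condexp_clm' {α : Type*} {E G : Type*}
    [NormedAddCommGroup E] [NormedSpace ℝ E] [CompleteSpace E]
    [NormedAddCommGroup G] [NormedSpace ℝ G] [CompleteSpace G]
    {m m0 : MeasurableSpace α} {μ : Measure α} (hm : m ≤ m0)
    [SigmaFinite (μ.trim hm)] (L : E →L[ℝ] G) {f : α → E} (hf : Integrable f μ) :
    (fun ω => L ((μ[f|m]) ω)) =ᵐ[μ] μ[fun ω => L (f ω)|m] := by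
  refine ae_eq_condExp_of_forall_setIntegral_eq hm (L.integrable_comp hf) ?_ ?_ ?_
  · intro s _ _
    exact (L.integrable_comp integrable_condExp).integrableOn
  · intro s hs hμs
    rw [L.integral_comp_comm integrable_condExp.integrableOn,
      L.integral_comp_comm hf.integrableOn,
      setIntegral_condExp hm hf hs]
  · exact (L.continuous.comp_stronglyMeasurable stronglyMeasurable_condExp).aestronglyMeasurable

private lemma integral_inner_eq' {D : ℕ} {Ω : Type}
    [mΩ : MeasurableSpace Ω] {μ : Measure Ω} [IsProbabilityMeasure μ]
    {m : MeasurableSpace Ω} (hm : m ≤ mΩ) {g s : Ω → EuclideanSpace ℝ (Fin D)}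
    (hgm : Measurable[m] g) (hs_int : Integrable s μ)
    (hg2 : Integrable (fun ω => ‖g ω‖ ^ 2) μ)
    (hs2 : Integrable (fun ω => ‖s ω‖ ^ 2) μ) {θ : ℝ}
    (hmean : μ[s|m] =ᵐ[μ] fun ω => (-θ) • g ω) :
    ∫ ω, (inner ℝ (g ω) (s ω) : ℝ) ∂μ = -θ * ∫ ω, ‖g ω‖ ^ 2 ∂μ := by
  have hgmΩ : Measurable[mΩ] g := fun t ht => hm _ (hgm ht)
  have hsm : AEStronglyMeasurable[mΩ] s μ := hs_int.aestronglyMeasurable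
  set gi : Fin D → Ω → ℝ := fun i ω => g ω i with hgi
  set si : Fin D → Ω → ℝ := fun i ω => s ω i with hsi
  have hgi_m : ∀ i, Measurable[mΩ] (gi i) :=
    fun i => (EuclideanSpace.proj i).continuous.measurable.comp hgmΩ
  have hgi_sm : ∀ i, StronglyMeasurable[m] (gi i) :=
    fun i => ((EuclideanSpace.proj i).continuous.measurable.comp hgm).stronglyMeasurable
  have hsi_m : ∀ i, AEStronglyMeasurable[mΩ] (si i) μ :=
    fun i => ((EuclideanSpace.proj (𝕜 := ℝ) i).continuous.comp_aestronglyMeasurable hsm)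
  have hsi_int : ∀ i, Integrable (si i) μ := fun i => by
    simpa using (EuclideanSpace.proj (𝕜 := ℝ) i).integrable_comp hs_int
  have hprod_int : ∀ i, Integrable (fun ω => gi i ω * si i ω) μ := by
    intro i
    have hmeas1 : AEStronglyMeasurable[mΩ] (fun ω => gi i ω * si i ω) μ :=
      ((hgi_m i).aemeasurable.mul (hsi_m i).aemeasurable).aestronglyMeasurable
    refine (((hg2.add hs2).const_mul (1/2 : ℝ))).mono' hmeas1 ?_
    filter_upwards with ω
    have h1 := coord_abs_le_norm' (g ω) i
    have h2 := coord_abs_le_norm' (s ω) i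
    simp only [Real.norm_eq_abs, Pi.add_apply]
    rw [abs_mul]
    nlinarith [abs_nonneg (g ω i), abs_nonneg (s ω i), sq_abs (g ω i), sq_abs (s ω i),
      norm_nonneg (g ω), norm_nonneg (s ω), sq_nonneg (‖g ω‖ - ‖s ω‖),
      sq_nonneg (|g ω i| - |s ω i|)]
  have hgigi_int : ∀ i, Integrable (fun ω => gi i ω * gi i ω) μ := by
    intro i
    have hmeas1 : AEStronglyMeasurable[mΩ] (fun ω => gi i ω * gi i ω) μ :=
      ((hgi_m i).aemeasurable.mul (hgi_m i).aemeasurable).aestronglyMeasurable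
    refine hg2.mono' hmeas1 ?_
    filter_upwards with ω
    have h1 := coord_abs_le_norm' (g ω) i
    simp only [Real.norm_eq_abs, Pi.add_apply]
    rw [abs_mul]
    nlinarith [abs_nonneg (g ω i), sq_abs (g ω i), norm_nonneg (g ω)]
  have hcoord : ∀ i, ∫ ω, gi i ω * si i ω ∂μ = -θ * ∫ ω, gi i ω * gi i ω ∂μ := by
    intro i
    have hce : μ[fun ω => gi i ω * si i ω|m] =ᵐ[μ] fun ω => gi i ω * (-θ * gi i ω) := by
      have h1 : μ[(fun ω => gi i ω * si i ω)|m] =ᵐ[μ] (gi i) * μ[si i|m] :=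
        condExp_mul_of_stronglyMeasurable_left (hgi_sm i) (hprod_int i) (hsi_int i)
      have h2 : μ[si i|m] =ᵐ[μ] fun ω => -θ * gi i ω := by
        have h3 := (condexp_clm' hm (EuclideanSpace.proj (𝕜 := ℝ) i) hs_int).symm
        refine h3.trans ?_
        filter_upwards [hmean] with ω hω
        simp [hω, hgi]
      filter_upwards [h1, h2] with ω h1ω h2ω
      simp only [Pi.mul_apply] at h1ω
      rw [h1ω, h2ω]
    calc ∫ ω, gi i ω * si i ω ∂μ
        = ∫ ω, (μ[fun ω => gi i ω * si i ω|m]) ω ∂μ := (integral_condExp hm).symm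
      _ = ∫ ω, gi i ω * (-θ * gi i ω) ∂μ := integral_congr_ae hce
      _ = -θ * ∫ ω, gi i ω * gi i ω ∂μ := by
          rw [← integral_const_mul]
          congr 1; funext ω; ring
  have hinner : ∀ ω, (inner ℝ (g ω) (s ω) : ℝ) = ∑ i, gi i ω * si i ω := by
    intro ω
    simp [PiLp.inner_apply, hgi, hsi, mul_comm]
  have hnorm : ∀ ω, ‖g ω‖ ^ 2 = ∑ i, gi i ω * gi i ω := by
    intro ω
    rw [EuclideanSpace.norm_sq_eq]
    simp [hgi, pow_two]
  calc ∫ ω, (inner ℝ (g ω) (s ω) : ℝ) ∂μ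
      = ∫ ω, ∑ i, gi i ω * si i ω ∂μ := by simp_rw [hinner]
    _ = ∑ i, ∫ ω, gi i ω * si i ω ∂μ := integral_finset_sum _ (fun i _ => hprod_int i)
    _ = ∑ i, -θ * ∫ ω, gi i ω * gi i ω ∂μ := by simp_rw [hcoord]
    _ = -θ * ∑ i, ∫ ω, gi i ω * gi i ω ∂μ := by rw [Finset.mul_sum]
    _ = -θ * ∫ ω, ∑ i, gi i ω * gi i ω ∂μ := by
        rw [integral_finset_sum _ (fun i _ => hgigi_int i)]
    _ = -θ * ∫ ω, ‖g ω‖ ^ 2 ∂μ := by simp_rw [hnorm]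

theorem sdm_dsgd_telescoped_bound {D : ℕ} (F : EuclideanSpace ℝ (Fin D) → ℝ)
    (M Fstar : ℝ)
    (hF : Differentiable ℝ F) (hLip : LipschitzWith M.toNNReal (gradient F))
    (hbd : ∀ y, Fstar ≤ F y)
    {Ω : Type} [mΩ : MeasurableSpace Ω] (μ : Measure Ω) [IsProbabilityMeasure μ]
    (ℱ : ℕ → MeasurableSpace Ω) (hℱ : ∀ t, ℱ t ≤ mΩ)
    (xs : ℕ → Ω → EuclideanSpace ℝ (Fin D))
    (x₀ : EuclideanSpace ℝ (Fin D)) (hx0 : ∀ ω, xs 0 ω = x₀)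
    (θ p c : ℝ) (hθ : θ ∈ Set.Ioc (0 : ℝ) 1) (hp : p ∈ Set.Ioc (0 : ℝ) 1) (hc : 0 ≤ c)
    (hθM : θ < 2 * p / M)
    (hmeas : ∀ t, Measurable[ℱ t] (xs t))
    (hstep_int : ∀ t, Integrable (fun ω => xs (t + 1) ω - xs t ω) μ)
    (hstep_sq_int : ∀ t, Integrable (fun ω => ‖xs (t + 1) ω - xs t ω‖ ^ 2) μ)
    (hmean : ∀ t,
      μ[(fun ω => xs (t + 1) ω - xs t ω) | ℱ t]
        =ᵐ[μ] fun ω => (-θ) • gradient F (xs t ω))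
    (hsec : ∀ t, ∀ᵐ ω ∂μ,
      (μ[(fun ω => ‖xs (t + 1) ω - xs t ω‖ ^ 2) | ℱ t]) ω
        ≤ θ ^ 2 / p * ‖gradient F (xs t ω)‖ ^ 2 + c)
    (T : ℕ) :
    ∑ t ∈ Finset.range (T + 1), ∫ ω, ‖gradient F (xs t ω)‖ ^ 2 ∂μ
      ≤ (2 * p * (F x₀ - Fstar) + M * p * c * (T + 1)) / (2 * p * θ - M * θ ^ 2) := by
  obtain ⟨hθ0, hθ1⟩ := hθ
  obtain ⟨hp0, hp1⟩ := hp
  have hM : 0 < M := by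
    by_contra h
    push_neg at h
    rcases lt_or_eq_of_le h with h' | h'
    · have : 2 * p / M ≤ 0 := le_of_lt (div_neg_of_pos_of_neg (by linarith) h')
      linarith
    · rw [h', div_zero] at hθM
      linarith
  have hMle : 0 ≤ M := hM.le
  have hMθ : M * θ < 2 * p := by
    rw [lt_div_iff₀ hM] at hθM; linarith
  have hxm : ∀ t, Measurable (xs t) := fun t => fun u hu => hℱ t _ (hmeas t hu)
  have hgc : Continuous (gradient F) := hLip.continuous
  have hFc : Continuous F := hF.continuous
  have hg2c : Continuous (fun x => ‖gradient F x‖ ^ 2) := (hgc.norm).pow 2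
  -- integrability by induction
  have hind : ∀ t, Integrable (fun ω => ‖gradient F (xs t ω)‖ ^ 2) μ ∧
      Integrable (fun ω => F (xs t ω)) μ := by
    intro t
    induction t with
    | zero =>
      constructor
      · have he : (fun ω => ‖gradient F (xs 0 ω)‖ ^ 2) = fun _ => ‖gradient F x₀‖ ^ 2 := by
          funext ω; rw [hx0]
        rw [he]; exact integrable_const _
      · have he : (fun ω => F (xs 0 ω)) = fun _ => F x₀ := by
          funext ω; rw [hx0]
        rw [he]; exact integrable_const _
    | succ t ih =>
      have hΔ2 := hstep_sq_int t
      have hlipb : ∀ ω, ‖gradient F (xs (t+1) ω)‖ ≤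
          ‖gradient F (xs t ω)‖ + M * ‖xs (t+1) ω - xs t ω‖ := by
        intro ω
        have h1 := hLip.dist_le_mul (xs (t+1) ω) (xs t ω)
        rw [dist_eq_norm, dist_eq_norm, Real.coe_toNNReal M hMle] at h1
        have h2 := norm_sub_norm_le (gradient F (xs (t+1) ω)) (gradient F (xs t ω))
        linarith [h2.trans h1]
      constructor
      · have hmeas1 : AEStronglyMeasurable (fun ω => ‖gradient F (xs (t+1) ω)‖ ^ 2) μ :=
          (hg2c.measurable.comp (hxm (t+1))).aestronglyMeasurable
        refine ((ih.1.const_mul 2).add (hΔ2.const_mul (2 * M ^ 2))).mono' hmeas1 ?_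
        filter_upwards with ω
        have h1 := hlipb ω
        have h2 : (0:ℝ) ≤ ‖gradient F (xs (t+1) ω)‖ := norm_nonneg _
        simp only [Pi.add_apply]
        rw [Real.norm_eq_abs, abs_of_nonneg (by positivity)]
        nlinarith [norm_nonneg (gradient F (xs t ω)), norm_nonneg (xs (t+1) ω - xs t ω),
          sq_nonneg (‖gradient F (xs t ω)‖ - M * ‖xs (t+1) ω - xs t ω‖)]
      · have hmeas1 : AEStronglyMeasurable (fun ω => F (xs (t+1) ω)) μ :=
          (hFc.measurable.comp (hxm (t+1))).aestronglyMeasurable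
        refine ((ih.2.abs.add (ih.1.const_mul (1/2))).add
          (hΔ2.const_mul (1/2 + M/2))).mono' hmeas1 ?_
        filter_upwards with ω
        have hdesc := descent_abs' F M hMle hF hLip (xs t ω) (xs (t+1) ω)
        have hinn := abs_real_inner_le_norm (gradient F (xs t ω)) (xs (t+1) ω - xs t ω)
        simp only [Real.norm_eq_abs, Pi.add_apply]
        have e1 : |F (xs (t+1) ω) - F (xs t ω)| ≤
            |(⟪gradient F (xs t ω), xs (t+1) ω - xs t ω⟫ : ℝ)| +
              M / 2 * ‖xs (t+1) ω - xs t ω‖ ^ 2 := by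
          have h4 := abs_add_le
            (F (xs (t+1) ω) - F (xs t ω) - ⟪gradient F (xs t ω), xs (t+1) ω - xs t ω⟫)
            (⟪gradient F (xs t ω), xs (t+1) ω - xs t ω⟫ : ℝ)
          have h5 : F (xs (t+1) ω) - F (xs t ω) - ⟪gradient F (xs t ω), xs (t+1) ω - xs t ω⟫ +
              (⟪gradient F (xs t ω), xs (t+1) ω - xs t ω⟫ : ℝ) =
              F (xs (t+1) ω) - F (xs t ω) := by ring
          rw [h5] at h4
          linarith
        have e2 : ‖gradient F (xs t ω)‖ * ‖xs (t+1) ω - xs t ω‖ ≤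
            1/2 * ‖gradient F (xs t ω)‖ ^ 2 + 1/2 * ‖xs (t+1) ω - xs t ω‖ ^ 2 := by
          nlinarith [sq_nonneg (‖gradient F (xs t ω)‖ - ‖xs (t+1) ω - xs t ω‖)]
        have e3 : |F (xs (t+1) ω)| ≤ |F (xs t ω)| + |F (xs (t+1) ω) - F (xs t ω)| := by
          have := abs_sub_abs_le_abs_sub (F (xs (t+1) ω)) (F (xs t ω))
          linarith
        linarith
  -- inner product integrability
  have hinner_int : ∀ t, Integrable
      (fun ω => (inner ℝ (gradient F (xs t ω)) (xs (t + 1) ω - xs t ω) : ℝ)) μ := by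
    intro t
    have hmeas1 : Measurable (fun ω => (gradient F (xs t ω), xs (t+1) ω - xs t ω)) :=
      (hgc.measurable.comp (hxm t)).prodMk ((hxm (t+1)).sub (hxm t))
    have hmeas2 : AEStronglyMeasurable
        (fun ω => (inner ℝ (gradient F (xs t ω)) (xs (t + 1) ω - xs t ω) : ℝ)) μ :=
      (continuous_inner.measurable.comp hmeas1).aestronglyMeasurable
    refine (((hind t).1.add (hstep_sq_int t)).const_mul (1/2 : ℝ)).mono' hmeas2 ?_
    filter_upwards with ω
    have hinn := abs_real_inner_le_norm (gradient F (xs t ω)) (xs (t+1) ω - xs t ω)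
    simp only [Real.norm_eq_abs, Pi.add_apply]
    nlinarith [norm_nonneg (gradient F (xs t ω)), norm_nonneg (xs (t+1) ω - xs t ω),
      sq_nonneg (‖gradient F (xs t ω)‖ - ‖xs (t+1) ω - xs t ω‖)]
  -- key expectation facts
  have hinner_eq : ∀ t,
      ∫ ω, (inner ℝ (gradient F (xs t ω)) (xs (t + 1) ω - xs t ω) : ℝ) ∂μ =
        -θ * ∫ ω, ‖gradient F (xs t ω)‖ ^ 2 ∂μ := by
    intro t
    exact integral_inner_eq' (hℱ t) (hgc.measurable.comp (hmeas t)) (hstep_int t)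
      (hind t).1 (hstep_sq_int t) (hmean t)
  have hsec_int : ∀ t, ∫ ω, ‖xs (t + 1) ω - xs t ω‖ ^ 2 ∂μ ≤
      θ ^ 2 / p * (∫ ω, ‖gradient F (xs t ω)‖ ^ 2 ∂μ) + c := by
    intro t
    have h1 : ∫ ω, ‖xs (t + 1) ω - xs t ω‖ ^ 2 ∂μ =
        ∫ ω, (μ[(fun ω => ‖xs (t + 1) ω - xs t ω‖ ^ 2)|ℱ t]) ω ∂μ :=
      (integral_condExp (hℱ t)).symm
    rw [h1]
    have h2 : ∫ ω, (μ[(fun ω => ‖xs (t + 1) ω - xs t ω‖ ^ 2)|ℱ t]) ω ∂μ ≤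
        ∫ ω, (θ ^ 2 / p * ‖gradient F (xs t ω)‖ ^ 2 + c) ∂μ := by
      refine integral_mono_ae integrable_condExp
        (((hind t).1.const_mul (θ ^ 2 / p)).add (integrable_const c)) (hsec t)
    refine h2.trans ?_
    rw [integral_add ((hind t).1.const_mul (θ ^ 2 / p)) (integrable_const c),
      integral_const_mul, integral_const]
    simp
  -- per-step descent in expectation
  set G : ℕ → ℝ := fun t => ∫ ω, ‖gradient F (xs t ω)‖ ^ 2 ∂μ with hG
  set A : ℕ → ℝ := fun t => ∫ ω, F (xs t ω) ∂μ with hA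
  have hstepF : ∀ t, A (t + 1) ≤ A t + (-θ * G t) + M / 2 * (θ ^ 2 / p * G t + c) := by
    intro t
    have hpt : ∀ ω, F (xs (t+1) ω) ≤ F (xs t ω) +
        (inner ℝ (gradient F (xs t ω)) (xs (t + 1) ω - xs t ω) : ℝ) +
        M / 2 * ‖xs (t+1) ω - xs t ω‖ ^ 2 := by
      intro ω
      have hdesc := descent_abs' F M hMle hF hLip (xs t ω) (xs (t+1) ω)
      have := abs_le.mp hdesc
      linarith [this.2]
    have h1 : A (t + 1) ≤ ∫ ω, (F (xs t ω) +
        (inner ℝ (gradient F (xs t ω)) (xs (t + 1) ω - xs t ω) : ℝ) +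
        M / 2 * ‖xs (t+1) ω - xs t ω‖ ^ 2) ∂μ := by
      refine integral_mono (hind (t+1)).2
        (((hind t).2.add (hinner_int t)).add ((hstep_sq_int t).const_mul (M/2))) hpt
    have hi12 : Integrable (fun ω => F (xs t ω) +
        (inner ℝ (gradient F (xs t ω)) (xs (t + 1) ω - xs t ω) : ℝ)) μ :=
      (hind t).2.add (hinner_int t)
    rw [integral_add hi12 ((hstep_sq_int t).const_mul (M/2)),
      integral_add (hind t).2 (hinner_int t), integral_const_mul, hinner_eq t] at h1
    have h2 := hsec_int t
    have hM2 : (0:ℝ) ≤ M / 2 := by linarith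
    have h3 : M / 2 * (∫ ω, ‖xs (t + 1) ω - xs t ω‖ ^ 2 ∂μ) ≤
        M / 2 * (θ ^ 2 / p * G t + c) := mul_le_mul_of_nonneg_left h2 hM2
    calc A (t+1) ≤ A t + -θ * G t + M / 2 * ∫ ω, ‖xs (t + 1) ω - xs t ω‖ ^ 2 ∂μ := h1
      _ ≤ A t + (-θ * G t) + M / 2 * (θ ^ 2 / p * G t + c) := by linarith
  set κ : ℝ := θ - M * θ ^ 2 / (2 * p) with hκdef
  have hkey : ∀ t, κ * G t ≤ A t - A (t + 1) + M * c / 2 := by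
    intro t
    have h1 := hstepF t
    have h2 : M / 2 * (θ ^ 2 / p * G t + c) = M * θ ^ 2 / (2 * p) * G t + M * c / 2 := by
      field_simp
    rw [h2] at h1
    have : κ * G t = θ * G t - M * θ ^ 2 / (2 * p) * G t := by ring
    linarith
  have hκpos : 0 < κ := by
    have h1 : 0 < 2 * p - M * θ := by linarith
    have h2 : κ = θ * (2 * p - M * θ) / (2 * p) := by
      rw [hκdef]
      field_simp
    rw [h2]
    positivity
  -- telescoping
  have htel : ∀ n : ℕ, κ * ∑ t ∈ Finset.range n, G t ≤ A 0 - A n + n * (M * c / 2) := by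
    intro n
    induction n with
    | zero => simp
    | succ n ihn =>
      rw [Finset.sum_range_succ, mul_add]
      have := hkey n
      push_cast
      linarith
  have hA0 : A 0 = F x₀ := by
    have he : (fun ω => F (xs 0 ω)) = fun _ => F x₀ := by funext ω; rw [hx0]
    rw [hA]
    simp only [he]
    rw [integral_const]
    simp
  have hAT : Fstar ≤ A (T + 1) := by
    have h1 : ∫ (_ : Ω), Fstar ∂μ ≤ ∫ ω, F (xs (T+1) ω) ∂μ :=
      integral_mono (integrable_const Fstar) (hind (T+1)).2 (fun ω => hbd _)
    rw [integral_const] at h1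
    simpa using h1
  have hfinal : κ * ∑ t ∈ Finset.range (T + 1), G t ≤
      (F x₀ - Fstar) + (T + 1) * (M * c / 2) := by
    have := htel (T + 1)
    rw [hA0] at this
    push_cast at this ⊢
    linarith
  have hsum_le : ∑ t ∈ Finset.range (T + 1), G t ≤
      ((F x₀ - Fstar) + (T + 1) * (M * c / 2)) / κ := by
    rw [le_div_iff₀ hκpos]
    linarith [hfinal, mul_comm κ (∑ t ∈ Finset.range (T + 1), G t)]
  refine hsum_le.trans (le_of_eq ?_)
  have hden : 2 * p * θ - M * θ ^ 2 = 2 * p * κ := by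
    rw [hκdef]
    field_simp
  rw [hden, div_eq_div_iff hκpos.ne' (by positivity : (0:ℝ) < 2 * p * κ).ne']
  push_cast
  ring
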